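/- Let h: [0,1]ⁿ → ℝ be twice continuously differentiable with ‖h‖_∞ ≤ α, ‖∂h/∂xᵢ‖_∞ ≤ βᵢ, ‖∂²h/∂xᵢ²‖_∞ ≤ γᵢᵢ. Fix y ∈ [0,1]ⁿ, t ∈ [0,1], and let Y have independent Bernoulli(yᵢ) components. With uᵢ(t,x) = (∂h/∂xᵢ)(tx + (1-t)y), U = h(Y) - h(y), and Y⁽ⁱ⁾ the vector Y with its i-th coordinate replaced by 0, one has E[(Yᵢ - yᵢ)·uᵢ(t, Y⁽ⁱ⁾)·(h(Y⁽ⁱ⁾)-h(y))] = 0 and |E[(Yᵢ - yᵢ)·uᵢ(t,Y)·U]| ≤ 2αtγᵢᵢ + βᵢ². -/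

import Mathlib

/-- The point of `{0,1}ⁿ ⊆ ℝⁿ` corresponding to a Boolean vector. -/
def boolToReal {n : ℕ} (x : Fin n → Bool) : Fin n → ℝ := fun i => if x i then 1 else 0

/-- Probability of the outcome `x` under a product of independent `Bernoulli(yᵢ)`. -/
def bernWeight {n : ℕ} (y : Fin n → ℝ) (x : Fin n → Bool) : ℝ :=
  ∏ i, if x i then y i else 1 - y i

namespace LOO

lemma mem_Icc_pi {n : ℕ} {z : Fin n → ℝ} (h : ∀ j, z j ∈ Set.Icc (0:ℝ) 1) :
    z ∈ Set.Icc (0 : Fin n → ℝ) 1 := ⟨fun j => (h j).1, fun j => (h j).2⟩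

lemma coord_mem {n : ℕ} {z : Fin n → ℝ} (h : z ∈ Set.Icc (0 : Fin n → ℝ) 1) (j : Fin n) :
    z j ∈ Set.Icc (0:ℝ) 1 := ⟨h.1 j, h.2 j⟩

lemma boolToReal_mem {n : ℕ} (x : Fin n → Bool) :
    boolToReal x ∈ Set.Icc (0 : Fin n → ℝ) 1 := by
  refine mem_Icc_pi fun j => ?_
  by_cases hx : x j <;> simp [boolToReal, hx]

lemma sum_bernWeight {n : ℕ} (y : Fin n → ℝ) :
    ∑ x : Fin n → Bool, bernWeight y x = 1 := by
  unfold bernWeight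
  rw [← Fintype.piFinset_univ,
    ← Finset.prod_univ_sum (t := fun _ => (Finset.univ : Finset Bool))
      (f := fun i b => if b then y i else 1 - y i)]
  simp

lemma bernWeight_nonneg {n : ℕ} {y : Fin n → ℝ} (hy : y ∈ Set.Icc (0:Fin n → ℝ) 1)
    (x : Fin n → Bool) : 0 ≤ bernWeight y x := by
  refine Finset.prod_nonneg fun j _ => ?_
  rcases coord_mem hy j with ⟨h0, h1⟩
  split <;> linarith

lemma weighted_zero {n : ℕ} (y : Fin n → ℝ) (i : Fin n) (F : (Fin n → ℝ) → ℝ) :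
    ∑ x : Fin n → Bool, bernWeight y x *
      ((boolToReal x i - y i) * F (Function.update (boolToReal x) i 0)) = 0 := by
  set σ : (Fin n → Bool) → (Fin n → Bool) := fun x => Function.update x i (!(x i)) with hσ
  have hinv : Function.Involutive σ := by
    intro x; funext j
    by_cases hj : j = i
    · subst hj; simp [hσ]
    · simp [hσ, Function.update_of_ne hj]
  set f : (Fin n → Bool) → ℝ := fun x => bernWeight y x *
      ((boolToReal x i - y i) * F (Function.update (boolToReal x) i 0)) with hf
  have key : ∀ x, f x + f (σ x) = 0 := by
    intro x
    have hupd : Function.update (boolToReal (σ x)) i 0 = Function.update (boolToReal x) i 0 := by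
      funext j
      by_cases hj : j = i
      · subst hj; simp
      · simp [Function.update_of_ne hj, boolToReal, hσ, hj]
    have hw : ∀ z : Fin n → Bool, bernWeight y z =
        (if z i then y i else 1 - y i) * ∏ j ∈ Finset.univ.erase i, (if z j then y j else 1 - y j) := by
      intro z
      rw [bernWeight, ← Finset.mul_prod_erase Finset.univ _ (Finset.mem_univ i)]
    have hR : (∏ j ∈ Finset.univ.erase i, (if (σ x) j then y j else 1 - y j)) =
        ∏ j ∈ Finset.univ.erase i, (if x j then y j else 1 - y j) := by
      refine Finset.prod_congr rfl fun j hj => ?_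
      have hj' : j ≠ i := Finset.ne_of_mem_erase hj
      simp [hσ, Function.update_of_ne hj']
    have hσi : (σ x) i = !(x i) := by simp [hσ]
    rw [hf]
    simp only [hupd, hw, hR, hσi]
    cases hxi : x i <;> simp [boolToReal, hσi, hxi] <;> ring
  have hbij : Function.Bijective σ := hinv.bijective
  have h2 : ∑ x : Fin n → Bool, f x = ∑ x : Fin n → Bool, f (σ x) :=
    (Fintype.sum_bijective σ hbij _ _ (fun x => rfl)).symm
  have : (∑ x : Fin n → Bool, f x) + (∑ x : Fin n → Bool, f x) = 0 := by
    nth_rewrite 2 [h2]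
    rw [← Finset.sum_add_distrib]
    simp [key]
  linarith

lemma mvt_single {n : ℕ} (g : (Fin n → ℝ) → ℝ) (hg : Differentiable ℝ g)
    (a : Fin n → ℝ) (i : Fin n) (v C : ℝ)
    (hC : ∀ s ∈ Set.Icc (0:ℝ) 1,
      |v * fderiv ℝ g (a + (s * v) • (Pi.single i 1 : Fin n → ℝ)) (Pi.single i 1)| ≤ C) :
    |g (a + v • (Pi.single i 1 : Fin n → ℝ)) - g a| ≤ C := by
  set e : Fin n → ℝ := Pi.single i 1 with he
  set L : ℝ → (Fin n → ℝ) := fun s => a + (s * v) • e with hL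
  set φ : ℝ → ℝ := fun s => g (L s) with hφ
  set φ' : ℝ → ℝ := fun s => v * fderiv ℝ g (L s) e with hφ'
  have hderiv : ∀ s : ℝ, HasDerivAt φ (φ' s) s := by
    intro s
    have hLs : HasDerivAt L (v • e) s := by
      have h1 : HasDerivAt (fun s : ℝ => s • (v • e)) ((1:ℝ) • (v • e)) s :=
        (hasDerivAt_id s).smul_const (v • e)
      have h2 : L = fun s : ℝ => a + s • (v • e) := by
        funext s; rw [hL]; simp [smul_smul]
      rw [h2]
      simpa using h1.const_add a
    have := ((hg (L s)).hasFDerivAt).comp_hasDerivAt s hLs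
    have heq : fderiv ℝ g (L s) (v • e) = φ' s := by
      rw [map_smul, hφ']; simp [smul_eq_mul, mul_comm]
    rw [heq] at this
    exact this
  have key := norm_image_sub_le_of_norm_deriv_le_segment'
    (f := φ) (f' := φ') (a := (0:ℝ)) (b := 1) (C := C)
    (fun s hs => (hderiv s).hasDerivWithinAt)
    (fun s hs => hC s (Set.mem_Icc_of_Ico hs)) 1 (Set.right_mem_Icc.2 zero_le_one)
  have h0 : φ 0 = g a := by simp [hφ, hL]
  have h1 : φ 1 = g (a + v • e) := by simp [hφ, hL]
  rw [h0, h1] at key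
  simpa using key

end LOO

open LOO in
theorem leave_one_out_decoupling (n : ℕ) (h : (Fin n → ℝ) → ℝ) (hh : ContDiff ℝ 2 h)
    (α : ℝ) (β γ : Fin n → ℝ)
    (hα : ∀ x ∈ Set.Icc (0 : Fin n → ℝ) 1, |h x| ≤ α)
    (hβ : ∀ x ∈ Set.Icc (0 : Fin n → ℝ) 1, ∀ i, |fderiv ℝ h x (Pi.single i 1)| ≤ β i)
    (hγ : ∀ x ∈ Set.Icc (0 : Fin n → ℝ) 1, ∀ i,
      |fderiv ℝ (fun z => fderiv ℝ h z (Pi.single i 1)) x (Pi.single i 1)| ≤ γ i)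
    (y : Fin n → ℝ) (hy : y ∈ Set.Icc (0 : Fin n → ℝ) 1)
    (t : ℝ) (ht : t ∈ Set.Icc (0 : ℝ) 1)
    (u : ℝ → (Fin n → ℝ) → Fin n → ℝ)
    (hu : ∀ s x i, u s x i = fderiv ℝ h (s • x + (1 - s) • y) (Pi.single i 1))
    (i : Fin n) :
    (∑ x : Fin n → Bool, bernWeight y x *
        ((boolToReal x i - y i) * u t (Function.update (boolToReal x) i 0) i *
          (h (Function.update (boolToReal x) i 0) - h y)) = 0) ∧
    (|∑ x : Fin n → Bool, bernWeight y x *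
        ((boolToReal x i - y i) * u t (boolToReal x) i * (h (boolToReal x) - h y))| ≤
      2 * α * t * γ i + (β i)^2) := by
  have hdiff : Differentiable ℝ h := hh.differentiable (by norm_num)
  set e : Fin n → ℝ := Pi.single i 1 with he
  set g : (Fin n → ℝ) → ℝ := fun z => fderiv ℝ h z e with hg
  have hgC : ContDiff ℝ 1 g := (hh.fderiv_right (by norm_num)).clm_apply contDiff_const
  have hgdiff : Differentiable ℝ g := hgC.differentiable (by norm_num)
  -- convex combination membership
  have ccomb : ∀ z ∈ Set.Icc (0 : Fin n → ℝ) 1,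
      t • z + (1 - t) • y ∈ Set.Icc (0 : Fin n → ℝ) 1 := fun z hz =>
    (convex_Icc (0 : Fin n → ℝ) 1) hz hy ht.1 (by linarith [ht.2]) (by ring)
  -- part 1
  have part1 : ∑ x : Fin n → Bool, bernWeight y x *
      ((boolToReal x i - y i) * u t (Function.update (boolToReal x) i 0) i *
        (h (Function.update (boolToReal x) i 0) - h y)) = 0 := by
    refine Eq.trans (Finset.sum_congr rfl fun x _ => by ring)
      (weighted_zero y i (fun z => u t z i * (h z - h y)))
  refine ⟨part1, ?_⟩
  -- part 2
  have h0α : 0 ≤ α := le_trans (abs_nonneg _) (hα y hy)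
  have h0β : 0 ≤ β i := le_trans (abs_nonneg _) (hβ y hy i)
  have h0γ : 0 ≤ γ i := le_trans (abs_nonneg _) (hγ y hy i)
  set K : ℝ := 2 * α * t * γ i + (β i)^2 with hK
  -- decomposition
  have hdec : ∑ x : Fin n → Bool, bernWeight y x *
      ((boolToReal x i - y i) * u t (boolToReal x) i * (h (boolToReal x) - h y)) =
      (∑ x : Fin n → Bool, bernWeight y x *
        ((boolToReal x i - y i) *
          ((u t (boolToReal x) i - u t (Function.update (boolToReal x) i 0) i) *
              (h (boolToReal x) - h y) +
            u t (Function.update (boolToReal x) i 0) i *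
              (h (boolToReal x) - h (Function.update (boolToReal x) i 0))))) +
      (∑ x : Fin n → Bool, bernWeight y x *
        ((boolToReal x i - y i) * u t (Function.update (boolToReal x) i 0) i *
          (h (Function.update (boolToReal x) i 0) - h y))) := by
    rw [← Finset.sum_add_distrib]
    exact Finset.sum_congr rfl fun x _ => by ring
  rw [hdec, part1, add_zero]
  -- bound the remaining sum termwise
  have hterm : ∀ x : Fin n → Bool, |bernWeight y x *
      ((boolToReal x i - y i) *
        ((u t (boolToReal x) i - u t (Function.update (boolToReal x) i 0) i) *
            (h (boolToReal x) - h y) +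
          u t (Function.update (boolToReal x) i 0) i *
            (h (boolToReal x) - h (Function.update (boolToReal x) i 0))))| ≤
      bernWeight y x * K := by
    intro x
    set X : Fin n → ℝ := boolToReal x with hX
    set Xi : Fin n → ℝ := Function.update X i 0 with hXi
    have hXmem : X ∈ Set.Icc (0 : Fin n → ℝ) 1 := boolToReal_mem x
    have hXimem : Xi ∈ Set.Icc (0 : Fin n → ℝ) 1 := by
      refine mem_Icc_pi fun j => ?_
      by_cases hj : j = i
      · subst hj; simp [hXi]
      · rw [hXi, Function.update_of_ne hj]; exact coord_mem hXmem j
    have hXicc : X i ∈ Set.Icc (0:ℝ) 1 := coord_mem hXmem i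
    -- z_s membership
    have hzmem : ∀ s ∈ Set.Icc (0:ℝ) 1,
        Xi + (s * X i) • e ∈ Set.Icc (0 : Fin n → ℝ) 1 := by
      intro s hs
      refine mem_Icc_pi fun j => ?_
      by_cases hj : j = i
      · subst hj
        simp only [Pi.add_apply, Pi.smul_apply, he, Pi.single_eq_same, smul_eq_mul, mul_one,
          hXi, Function.update_self]
        constructor
        · nlinarith [hs.1, hs.2, hXicc.1, hXicc.2]
        · nlinarith [hs.1, hs.2, hXicc.1, hXicc.2]
      · have : e j = 0 := by rw [he]; exact Pi.single_eq_of_ne hj 1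
        simp only [Pi.add_apply, Pi.smul_apply, this, smul_eq_mul, mul_zero, add_zero,
          hXi, Function.update_of_ne hj]
        exact coord_mem hXmem j
    -- identity X = Xi + (X i) • e
    have hid : Xi + (X i) • e = X := by
      funext j
      by_cases hj : j = i
      · subst hj
        simp [hXi, he]
      · have : e j = 0 := by rw [he]; exact Pi.single_eq_of_ne hj 1
        simp [hXi, Function.update_of_ne hj, this]
    -- E4 : |h X - h Xi| ≤ β i
    have E4 : |h X - h Xi| ≤ β i := by
      have := mvt_single h hdiff Xi i (X i) (β i) ?_
      · rwa [← he, hid] at this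
      · intro s hs
        rw [abs_mul]
        have h1 : |X i| ≤ 1 := by rw [abs_of_nonneg hXicc.1]; exact hXicc.2
        have h2 : |fderiv ℝ h (Xi + (s * X i) • (Pi.single i 1 : Fin n → ℝ)) (Pi.single i 1)|
            ≤ β i := hβ _ (by rw [← he] at *; exact hzmem s hs) i
        calc |X i| * _ ≤ 1 * (β i) :=
              mul_le_mul h1 h2 (abs_nonneg _) zero_le_one
          _ = β i := one_mul _
    -- E1 : |u t X i - u t Xi i| ≤ t * γ i
    have E1 : |u t X i - u t Xi i| ≤ t * γ i := by
      rw [hu, hu]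
      have hid2 : ∀ s : ℝ, (t • Xi + (1 - t) • y) + (s * (t * X i)) • e =
          t • (Xi + (s * X i) • e) + (1 - t) • y := by
        intro s
        funext j
        simp only [Pi.add_apply, Pi.smul_apply, smul_eq_mul]
        ring
      have htop : (t • Xi + (1 - t) • y) + (t * X i) • e = t • X + (1 - t) • y := by
        have := hid2 1
        rw [one_mul] at this
        rw [this, one_mul, hid]
      have := mvt_single g hgdiff (t • Xi + (1 - t) • y) i (t * X i) (t * γ i) ?_
      · rw [← he, htop] at this
        exact this
      · intro s hs
        rw [abs_mul]
        have h1 : |t * X i| ≤ t := by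
          rw [abs_of_nonneg (mul_nonneg ht.1 hXicc.1)]
          nlinarith [hXicc.2, ht.1]
        have hmem : (t • Xi + (1 - t) • y) + (s * (t * X i)) • (Pi.single i 1 : Fin n → ℝ)
            ∈ Set.Icc (0 : Fin n → ℝ) 1 := by
          rw [← he, hid2 s]
          exact ccomb _ (hzmem s hs)
        have h2 := hγ _ hmem i
        calc |t * X i| * _ ≤ t * γ i :=
              mul_le_mul h1 h2 (abs_nonneg _) (le_trans (abs_nonneg _) h1)
          _ = t * γ i := rfl
    -- E2 : |h X - h y| ≤ 2 α
    have E2 : |h X - h y| ≤ 2 * α := by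
      calc |h X - h y| ≤ |h X| + |h y| := abs_sub _ _
        _ ≤ α + α := add_le_add (hα X hXmem) (hα y hy)
        _ = 2 * α := by ring
    -- E3 : |u t Xi i| ≤ β i
    have E3 : |u t Xi i| ≤ β i := by
      rw [hu]
      exact hβ _ (ccomb Xi hXimem) i
    -- |d| ≤ 1
    have hd : |X i - y i| ≤ 1 := by
      rcases coord_mem hy i with ⟨hy0, hy1⟩
      rw [abs_le]; constructor <;> nlinarith [hXicc.1, hXicc.2]
    -- assemble
    rw [abs_mul, abs_of_nonneg (bernWeight_nonneg hy x)]
    refine mul_le_mul_of_nonneg_left ?_ (bernWeight_nonneg hy x)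
    calc |(X i - y i) * _| = |X i - y i| * |_| := abs_mul _ _
      _ ≤ 1 * |(u t X i - u t Xi i) * (h X - h y) + u t Xi i * (h X - h Xi)| :=
          mul_le_mul_of_nonneg_right hd (abs_nonneg _)
      _ = |(u t X i - u t Xi i) * (h X - h y) + u t Xi i * (h X - h Xi)| := one_mul _
      _ ≤ |(u t X i - u t Xi i) * (h X - h y)| + |u t Xi i * (h X - h Xi)| := abs_add_le _ _
      _ = |u t X i - u t Xi i| * |h X - h y| + |u t Xi i| * |h X - h Xi| := by
          rw [abs_mul, abs_mul]
      _ ≤ (t * γ i) * (2 * α) + (β i) * (β i) :=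
          add_le_add
            (mul_le_mul E1 E2 (abs_nonneg _) (le_trans (abs_nonneg _) E1))
            (mul_le_mul E3 E4 (abs_nonneg _) (le_trans (abs_nonneg _) E3))
      _ = K := by rw [hK]; ring
  calc |∑ x : Fin n → Bool, bernWeight y x *
        ((boolToReal x i - y i) *
          ((u t (boolToReal x) i - u t (Function.update (boolToReal x) i 0) i) *
              (h (boolToReal x) - h y) +
            u t (Function.update (boolToReal x) i 0) i *
              (h (boolToReal x) - h (Function.update (boolToReal x) i 0))))|
      ≤ ∑ x : Fin n → Bool, |bernWeight y x *
        ((boolToReal x i - y i) *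
          ((u t (boolToReal x) i - u t (Function.update (boolToReal x) i 0) i) *
              (h (boolToReal x) - h y) +
            u t (Function.update (boolToReal x) i 0) i *
              (h (boolToReal x) - h (Function.update (boolToReal x) i 0))))| :=
        Finset.abs_sum_le_sum_abs _ _
    _ ≤ ∑ x : Fin n → Bool, bernWeight y x * K :=
        Finset.sum_le_sum fun x _ => hterm x
    _ = (∑ x : Fin n → Bool, bernWeight y x) * K := by rw [Finset.sum_mul]
    _ = K := by rw [sum_bernWeight, one_mul]
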